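/- Let 0 < σ₂ ≤ σ₁ ≤ 1. Then for every α ∈ [0,1], T(N(0,1), N(0,σ₂²))(α) ≤ T(N(0,1), N(0,σ₁²))(α), i.e., the trade-off function between a standard Gaussian and a centered Gaussian with smaller variance is pointwise smaller. -/

import Mathlib

open MeasureTheory ProbabilityTheory Real
open scoped NNReal ENNReal

/-- The trade-off function `T(P,Q)(a)`: the infimum of Type II errors `1 - ∫ φ dQ`
over all measurable randomized rejection rules `φ : Ω → [0,1]` with Type I error
`∫ φ dP ≤ a`. -/
noncomputable def tradeOff {Ω : Type*} [MeasurableSpace Ω] (P Q : Measure Ω) (a : ℝ) : ℝ :=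
  sInf { b : ℝ | ∃ φ : Ω → ℝ, Measurable φ ∧ (∀ x, φ x ∈ Set.Icc (0:ℝ) 1) ∧
    (∫ x, φ x ∂P) ≤ a ∧ b = 1 - ∫ x, φ x ∂Q }

lemma pdf_rw (a b : ℝ≥0) (ha : a ≠ 0) (hb : b ≠ 0) (z x : ℝ) :
    gaussianPDFReal 0 a x * gaussianPDFReal x b z =
      ((√(2 * π * a))⁻¹ * (√(2 * π * b))⁻¹ * rexp (- z^2 / (2 * (a + b)))) *
        rexp (-(((a:ℝ) + b)/(2*a*b)) * (x - (a:ℝ)*z/(a+b))^2) := by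
  have hA : (0:ℝ) < a := lt_of_le_of_ne (a.coe_nonneg) (by exact_mod_cast (Ne.symm ha))
  have hB : (0:ℝ) < b := lt_of_le_of_ne (b.coe_nonneg) (by exact_mod_cast (Ne.symm hb))
  have hAB : (0:ℝ) < (a:ℝ) + b := by linarith
  simp only [gaussianPDFReal]
  rw [mul_mul_mul_comm, ← Real.exp_add,
    mul_assoc ((√(2 * π * (a:ℝ)))⁻¹ * (√(2 * π * (b:ℝ)))⁻¹), ← Real.exp_add]
  congr 1
  congr 1
  field_simp
  ring

lemma pdf_conv (a b : ℝ≥0) (ha : a ≠ 0) (hb : b ≠ 0) (z : ℝ) :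
    ∫ x, gaussianPDFReal 0 a x * gaussianPDFReal x b z = gaussianPDFReal 0 (a + b) z := by
  have hA : (0:ℝ) < a := lt_of_le_of_ne (a.coe_nonneg) (by exact_mod_cast (Ne.symm ha))
  have hB : (0:ℝ) < b := lt_of_le_of_ne (b.coe_nonneg) (by exact_mod_cast (Ne.symm hb))
  have hAB : (0:ℝ) < (a:ℝ) + b := by linarith
  have hk : (0:ℝ) < ((a:ℝ) + b)/(2*a*b) := by positivity
  simp_rw [pdf_rw a b ha hb z]
  rw [integral_const_mul, integral_sub_right_eq_self
    (fun x => rexp (-(((a:ℝ) + b)/(2*a*b)) * x^2)) ((a:ℝ)*z/(a+b)), integral_gaussian]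
  simp only [gaussianPDFReal, NNReal.coe_add, sub_zero]
  have key : √(π / (((a:ℝ)+b)/(2*a*b))) = √(2*π*a) * √(2*π*b) * (√(2*π*((a:ℝ)+b)))⁻¹ := by
    rw [← Real.sqrt_inv (2*π*((a:ℝ)+b)), ← Real.sqrt_mul (by positivity : (0:ℝ) ≤ 2*π*a) (2*π*b),
      ← Real.sqrt_mul (by positivity)]
    congr 1
    field_simp
  rw [key]
  have h1 : √(2*π*(a:ℝ)) ≠ 0 := by positivity
  have h2 : √(2*π*(b:ℝ)) ≠ 0 := by positivity
  field_simp


lemma integrable_pdf_mul (a b : ℝ≥0) (ha : a ≠ 0) (hb : b ≠ 0) (z : ℝ) :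
    Integrable (fun x => gaussianPDFReal 0 a x * gaussianPDFReal x b z) := by
  have hA : (0:ℝ) < a := lt_of_le_of_ne (a.coe_nonneg) (by exact_mod_cast (Ne.symm ha))
  have hB : (0:ℝ) < b := lt_of_le_of_ne (b.coe_nonneg) (by exact_mod_cast (Ne.symm hb))
  have hk : (0:ℝ) < ((a:ℝ) + b)/(2*a*b) := by positivity
  simp_rw [pdf_rw a b ha hb z]
  exact ((integrable_exp_neg_mul_sq hk).comp_sub_right _).const_mul _

lemma gauss_conv (a b : ℝ≥0) :
    ((gaussianReal 0 a).prod (gaussianReal 0 b)).map (fun p : ℝ × ℝ => p.1 + p.2) =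
      gaussianReal 0 (a + b) := by
  by_cases ha : a = 0
  · subst ha
    rw [gaussianReal_zero_var, Measure.dirac_prod, Measure.map_map (by fun_prop) (by fun_prop)]
    simp only [Function.comp_def, zero_add]
    rw [show (fun x : ℝ => x) = id from rfl, Measure.map_id]
  by_cases hb : b = 0
  · subst hb
    rw [gaussianReal_zero_var, Measure.prod_dirac, Measure.map_map (by fun_prop) (by fun_prop)]
    simp only [Function.comp_def, add_zero]
    rw [show (fun x : ℝ => x) = id from rfl, Measure.map_id]
  have hab : a + b ≠ 0 := by positivity
  have hjoint : Measurable (Function.uncurry fun x z : ℝ => gaussianPDF x b z) := by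
    simp only [Function.uncurry, gaussianPDF, gaussianPDFReal]
    fun_prop
  have hjoint2 : Measurable (Function.uncurry fun x z : ℝ => gaussianPDF 0 a x * gaussianPDF x b z) := by
    simp only [Function.uncurry, gaussianPDF, gaussianPDFReal]
    fun_prop
  ext s hs
  rw [Measure.map_apply (by fun_prop) hs, Measure.prod_apply (hs.preimage (by fun_prop))]
  have h1 : ∀ x : ℝ, (gaussianReal 0 b) (Prod.mk x ⁻¹' ((fun p : ℝ × ℝ => p.1 + p.2) ⁻¹' s))
      = ∫⁻ z in s, gaussianPDF x b z := by
    intro x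
    have h2 : (Prod.mk x ⁻¹' ((fun p : ℝ × ℝ => p.1 + p.2) ⁻¹' s)) = (fun z => x + z) ⁻¹' s := rfl
    rw [h2, ← Measure.map_apply (by fun_prop) hs, gaussianReal_map_const_add, zero_add,
      gaussianReal_apply _ hb]
  simp_rw [h1]
  rw [gaussianReal_of_var_ne_zero _ ha,
    lintegral_withDensity_eq_lintegral_mul _ (measurable_gaussianPDF _ _)
      (hjoint.lintegral_prod_right)]
  simp only [Pi.mul_apply]
  have h3 : ∀ x : ℝ, gaussianPDF 0 a x * ∫⁻ z in s, gaussianPDF x b z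
      = ∫⁻ z in s, gaussianPDF 0 a x * gaussianPDF x b z := by
    intro x
    rw [lintegral_const_mul _ (by fun_prop)]
  simp_rw [h3]
  rw [lintegral_lintegral_swap hjoint2.aemeasurable]
  have h4 : ∀ z : ℝ, ∫⁻ x, gaussianPDF 0 a x * gaussianPDF x b z
      = gaussianPDF 0 (a + b) z := by
    intro z
    simp only [gaussianPDF]
    simp_rw [← ENNReal.ofReal_mul (gaussianPDFReal_nonneg 0 a _)]
    rw [← ofReal_integral_eq_lintegral_ofReal (integrable_pdf_mul a b ha hb z)
      (ae_of_all _ (fun x => mul_nonneg (gaussianPDFReal_nonneg _ _ _) (gaussianPDFReal_nonneg _ _ _))),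
      pdf_conv a b ha hb z]
  simp_rw [h4]
  rw [gaussianReal_apply _ hab]

lemma bdd_integrable {Ω : Type*} [MeasurableSpace Ω] (μ : Measure Ω) [IsProbabilityMeasure μ]
    (φ : Ω → ℝ) (hm : AEStronglyMeasurable φ μ) (h01 : ∀ x, φ x ∈ Set.Icc (0:ℝ) 1) :
    Integrable φ μ := by
  refine (integrable_const (1:ℝ)).mono' hm (ae_of_all _ fun x => ?_)
  rw [Real.norm_eq_abs, abs_le]
  exact ⟨by linarith [(h01 x).1], (h01 x).2⟩

lemma int_mem_Icc {Ω : Type*} [MeasurableSpace Ω] (μ : Measure Ω) [IsProbabilityMeasure μ]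
    (φ : Ω → ℝ) (hm : AEStronglyMeasurable φ μ) (h01 : ∀ x, φ x ∈ Set.Icc (0:ℝ) 1) :
    (∫ x, φ x ∂μ) ∈ Set.Icc (0:ℝ) 1 := by
  have hint := bdd_integrable μ φ hm h01
  constructor
  · exact integral_nonneg fun x => (h01 x).1
  · calc ∫ x, φ x ∂μ ≤ ∫ _x, (1:ℝ) ∂μ := integral_mono hint (integrable_const 1) fun x => (h01 x).2
    _ = 1 := by simp

lemma step (c : ℝ) (t : ℝ≥0) (φ : ℝ → ℝ) (hφ : Measurable φ)
    (hφ01 : ∀ x, φ x ∈ Set.Icc (0:ℝ) 1) (v : ℝ≥0) :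
    ∫ x, (∫ z, φ (c*x + z) ∂(gaussianReal 0 t)) ∂(gaussianReal 0 v)
      = ∫ y, φ y ∂(gaussianReal 0 (⟨c^2, sq_nonneg c⟩ * v + t)) := by
  have h0 : (gaussianReal 0 v).map (c * ·) = gaussianReal 0 (⟨c^2, sq_nonneg c⟩ * v) := by
    rw [gaussianReal_map_const_mul, mul_zero]
    rfl
  have hmap : gaussianReal 0 (⟨c^2, sq_nonneg c⟩ * v + t)
      = ((gaussianReal 0 v).prod (gaussianReal 0 t)).map (fun p : ℝ × ℝ => c * p.1 + p.2) := by
    have h2 := Measure.map_prod_map (f := fun x : ℝ => c*x) (g := id (α := ℝ))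
      (gaussianReal 0 v) (gaussianReal 0 t) (by fun_prop) measurable_id
    rw [Measure.map_id] at h2
    rw [← gauss_conv (⟨c^2, sq_nonneg c⟩ * v) t, ← h0, h2,
      Measure.map_map (by fun_prop) (by fun_prop)]
    rfl
  have hcomp : Measurable (fun p : ℝ × ℝ => φ (c * p.1 + p.2)) := hφ.comp (by fun_prop)
  rw [hmap, integral_map (by fun_prop) hφ.aestronglyMeasurable,
    integral_prod _ (bdd_integrable _ _ hcomp.aestronglyMeasurable fun p => hφ01 _)]

/-- for `0 < σ₂ ≤ σ₁ ≤ 1`, the trade-off function between a standard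
Gaussian and a centered Gaussian with smaller variance is pointwise smaller. -/
theorem stmt_1 (σ₁ σ₂ : ℝ) (hσ₂ : 0 < σ₂) (h21 : σ₂ ≤ σ₁) (h1 : σ₁ ≤ 1)
    (α : ℝ) (hα : α ∈ Set.Icc (0:ℝ) 1) :
    tradeOff (gaussianReal 0 1) (gaussianReal 0 (σ₂ ^ 2).toNNReal) α ≤
      tradeOff (gaussianReal 0 1) (gaussianReal 0 (σ₁ ^ 2).toNNReal) α := by
  by_cases hσ21 : σ₂ = 1
  · have h11 : σ₁ = 1 := le_antisymm h1 (hσ21 ▸ h21)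
    rw [h11, hσ21]
  have hlt : σ₂ < 1 := lt_of_le_of_ne (h21.trans h1) hσ21
  have hden : (0:ℝ) < 1 - σ₂^2 := by nlinarith
  have hnum : (0:ℝ) ≤ 1 - σ₁^2 := by nlinarith
  set c : ℝ := √((1-σ₁^2)/(1-σ₂^2)) with hc
  have hc2 : c^2 = (1-σ₁^2)/(1-σ₂^2) := Real.sq_sqrt (by positivity)
  have hcle : c^2 ≤ 1 := by rw [hc2, div_le_one hden]; nlinarith
  set cc : ℝ≥0 := ⟨c^2, sq_nonneg c⟩ with hcc
  have hccle : cc ≤ 1 := by rw [← NNReal.coe_le_coe, NNReal.coe_one]; exact hcle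
  set t : ℝ≥0 := 1 - cc with htdef
  have ht1 : cc * 1 + t = 1 := by rw [mul_one]; exact add_tsub_cancel_of_le hccle
  have ht2 : cc * (σ₂^2).toNNReal + t = (σ₁^2).toNNReal := by
    apply NNReal.coe_injective
    rw [NNReal.coe_add, NNReal.coe_mul, htdef, NNReal.coe_sub hccle,
      Real.coe_toNNReal _ (sq_nonneg σ₂), Real.coe_toNNReal _ (sq_nonneg σ₁), NNReal.coe_one]
    show c^2 * σ₂^2 + (1 - c^2) = σ₁^2
    rw [hc2]
    field_simp
    ring
  apply csInf_le_csInf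
  · refine ⟨0, ?_⟩
    rintro b ⟨φ, hm, h01, -, rfl⟩
    have h := int_mem_Icc (gaussianReal 0 (σ₂^2).toNNReal) φ hm.aestronglyMeasurable h01
    linarith [h.2]
  · exact ⟨1, fun _ => 0, measurable_const, fun x => ⟨le_refl 0, zero_le_one⟩,
      by simpa using hα.1, by simp⟩
  · rintro b ⟨φ, hm, h01, hP, rfl⟩
    have hum : Measurable (Function.uncurry fun x z : ℝ => φ (c*x+z)) := hm.comp (by fun_prop)
    refine ⟨fun x => ∫ z, φ (c*x + z) ∂(gaussianReal 0 t), ?_, ?_, ?_, ?_⟩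
    · exact hum.stronglyMeasurable.integral_prod_right.measurable
    · intro x
      exact int_mem_Icc _ _ (hm.comp (by fun_prop : Measurable fun z : ℝ => c*x+z)).aestronglyMeasurable
        fun z => h01 _
    · have h := step c t φ hm h01 1
      rw [ht1] at h
      rw [h]
      exact hP
    · have h := step c t φ hm h01 ((σ₂^2).toNNReal)
      rw [ht2] at h
      rw [h]
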